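/- Consider two agents with dynamics ẋ₁ = L_{x₁}·(x₂−x₁)/‖x₂−x₁‖ and ẋ₂ = L_{x₂}·(x₁−x₂)/‖x₁−x₂‖ (defined when x₁ ≠ x₂), with ‖x₁(0)‖, ‖x₂(0)‖ ≤ C < π. Then along any solution, d/dt ‖x₂ − x₁‖² = −2(x₂−x₁)ᵀ(L_{x₁}+L_{x₂})(x₂−x₁)/‖x₂−x₁‖ ≤ −2c₁‖x₂−x₁‖ for some constant c₁ > 0 depending only on C, so the disagreement ‖x₂−x₁‖ decreases at rate at least c₁ while x₁ ≠ x₂. -/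

import Mathlib

open Matrix Real

/-- The skew-symmetric "hat" matrix of `x ∈ ℝ³`. -/
def hat (p : Fin 3 → ℝ) : Matrix (Fin 3) (Fin 3) ℝ :=
  !![0, -p 2, p 1; p 2, 0, -p 0; -p 1, p 0, 0]

/-- Euclidean norm on `Fin 3 → ℝ`. -/
noncomputable def nrm (p : Fin 3 → ℝ) : ℝ := Real.sqrt (∑ i, (p i) ^ 2)

/-- The sinc function: `sinc 0 = 1`, `sinc x = sin x / x` otherwise. -/
noncomputable def sinc (x : ℝ) : ℝ := if x = 0 then 1 else Real.sin x / x

/-- `α(θ) = sinc(θ) / sinc(θ/2)²`. -/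
noncomputable def alph (θ : ℝ) : ℝ := _root_.sinc θ / (_root_.sinc (θ / 2)) ^ 2

/-- Symmetric part `L¹_x` of the transition matrix (with `L¹_0 = I`). -/
noncomputable def Lsym (x : Fin 3 → ℝ) : Matrix (Fin 3) (Fin 3) ℝ :=
  if x = 0 then 1 else
    alph (nrm x) • (1 : Matrix (Fin 3) (Fin 3) ℝ)
      + ((1 - alph (nrm x)) / (nrm x) ^ 2) • Matrix.vecMulVec x x

/-- The attitude-kinematics transition matrix `L_x = L¹_x + hat(x)/2` (with `L_0 = I`). -/
noncomputable def Lmat (x : Fin 3 → ℝ) : Matrix (Fin 3) (Fin 3) ℝ :=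
  Lsym x + (2⁻¹ : ℝ) • hat x

lemma nrm_nonneg (p : Fin 3 → ℝ) : 0 ≤ nrm p := Real.sqrt_nonneg _

lemma sq_nrm (p : Fin 3 → ℝ) : nrm p ^ 2 = ∑ i, (p i) ^ 2 :=
  Real.sq_sqrt (by positivity)

lemma nrm_pos {p : Fin 3 → ℝ} (h : p ≠ 0) : 0 < nrm p := by
  rcases (nrm_nonneg p).lt_or_eq with h1 | h1
  · exact h1
  · exfalso; apply h
    have h2 : (∑ i, (p i) ^ 2) = 0 := by
      have := sq_nrm p; rw [← h1] at this; simpa using this.symm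
    funext i
    have := (Finset.sum_eq_zero_iff_of_nonneg (by intro i _; positivity)).1 h2 i (Finset.mem_univ i)
    have : p i = 0 := by nlinarith [this]
    simpa using this

lemma nrm_neg (p : Fin 3 → ℝ) : nrm (-p) = nrm p := by
  simp [nrm]

lemma dot_hat (x v : Fin 3 → ℝ) : v ⬝ᵥ (hat x *ᵥ v) = 0 := by
  simp [hat, Matrix.mulVec, dotProduct, Fin.sum_univ_three]; ring


lemma sin_ge (C θ : ℝ) (hC0 : 0 < C) (hC : C < Real.pi) (h0 : 0 ≤ θ) (hθ : θ ≤ C) :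
    (θ / C) * Real.sin C ≤ Real.sin θ := by
  have hconc := strictConcaveOn_sin_Icc.concaveOn
  have h1 : (1 - θ / C) • (0:ℝ) + (θ / C) • C = θ := by
    rw [smul_zero, zero_add, smul_eq_mul]; exact div_mul_cancel₀ θ hC0.ne'
  have := hconc.2 (Set.mem_Icc.2 ⟨le_refl 0, Real.pi_pos.le⟩)
    (Set.mem_Icc.2 ⟨hC0.le, hC.le⟩)
    (show (0:ℝ) ≤ 1 - θ / C by rw [sub_nonneg]; exact div_le_one_of_le₀ hθ hC0.le)
    (show (0:ℝ) ≤ θ / C by positivity) (by ring)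
  rw [h1] at this
  simpa using this

lemma sinc_ge (C θ : ℝ) (hC0 : 0 < C) (hC : C < Real.pi) (h0 : 0 < θ) (hθ : θ ≤ C) :
    Real.sin C / C ≤ _root_.sinc θ := by
  rw [_root_.sinc, if_neg h0.ne']
  rw [div_le_div_iff₀ hC0 h0]
  have := sin_ge C θ hC0 hC h0.le hθ
  calc Real.sin C * θ = ((θ/C) * Real.sin C) * C := by field_simp
    _ ≤ Real.sin θ * C := by nlinarith

lemma sinc_half_mem (θ : ℝ) (h0 : 0 < θ) (hθ : θ < Real.pi) :
    0 < _root_.sinc (θ/2) ∧ _root_.sinc (θ/2) ≤ 1 := by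
  have h2 : (0:ℝ) < θ/2 := by linarith
  rw [_root_.sinc, if_neg h2.ne']
  constructor
  · apply div_pos _ h2
    exact Real.sin_pos_of_pos_of_lt_pi h2 (by linarith [Real.pi_pos])
  · rw [div_le_one h2]; exact Real.sin_le h2.le

lemma alph_ge (C θ : ℝ) (hC0 : 0 < C) (hC : C < Real.pi) (h0 : 0 < θ) (hθ : θ ≤ C) :
    Real.sin C / C ≤ alph θ := by
  obtain ⟨hs1, hs2⟩ := sinc_half_mem θ h0 (lt_of_le_of_lt hθ hC)
  have hsc : Real.sin C / C ≤ _root_.sinc θ := sinc_ge C θ hC0 hC h0 hθ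
  have hpos : 0 < Real.sin C / C :=
    div_pos (Real.sin_pos_of_pos_of_lt_pi hC0 hC) hC0
  rw [alph]
  calc Real.sin C / C ≤ _root_.sinc θ := hsc
    _ ≤ _root_.sinc θ / _root_.sinc (θ/2)^2 := by
        rw [le_div_iff₀ (by positivity)]
        have hst : 0 < _root_.sinc θ := hpos.trans_le hsc
        have hs3 : _root_.sinc (θ/2)^2 ≤ 1 := by nlinarith
        nlinarith [mul_le_of_le_one_right hst.le hs3]

lemma dot_self_eq (v : Fin 3 → ℝ) : v ⬝ᵥ v = nrm v ^ 2 := by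
  rw [sq_nrm, dotProduct]; congr 1; funext i; ring

lemma dot_vecMulVec (x v : Fin 3 → ℝ) :
    v ⬝ᵥ (Matrix.vecMulVec x x *ᵥ v) = (x ⬝ᵥ v) ^ 2 := by
  simp [Matrix.vecMulVec, Matrix.mulVec, dotProduct, Fin.sum_univ_three]; ring

lemma cs (x v : Fin 3 → ℝ) : (x ⬝ᵥ v) ^ 2 ≤ nrm x ^ 2 * nrm v ^ 2 := by
  rw [sq_nrm, sq_nrm, dotProduct]
  exact Finset.sum_mul_sq_le_sq_mul_sq Finset.univ x v

lemma dot_Lmat_ge (C : ℝ) (hC0 : 0 < C) (hC : C < Real.pi) (x v : Fin 3 → ℝ)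
    (hx : nrm x ≤ C) :
    min (Real.sin C / C) 1 * nrm v ^ 2 ≤ v ⬝ᵥ (Lmat x *ᵥ v) := by
  have hm1 : min (Real.sin C / C) 1 ≤ 1 := min_le_right _ _
  have hLm : v ⬝ᵥ (Lmat x *ᵥ v) = v ⬝ᵥ (Lsym x *ᵥ v) := by
    rw [Lmat, Matrix.add_mulVec, dotProduct_add, Matrix.smul_mulVec,
      dotProduct_smul, dot_hat]
    simp
  rw [hLm]
  by_cases hx0 : x = 0
  · rw [Lsym, if_pos hx0, Matrix.one_mulVec, dot_self_eq]
    nlinarith [sq_nonneg (nrm v)]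
  · rw [Lsym, if_neg hx0]
    have hθ : 0 < nrm x := nrm_pos hx0
    set α := alph (nrm x) with hα
    have hαge : Real.sin C / C ≤ α := alph_ge C (nrm x) hC0 hC hθ hx
    have hmα : min (Real.sin C / C) 1 ≤ α := le_trans (min_le_left _ _) hαge
    rw [Matrix.add_mulVec, dotProduct_add, Matrix.smul_mulVec, dotProduct_smul,
      Matrix.smul_mulVec, dotProduct_smul, Matrix.one_mulVec, dot_self_eq,
      dot_vecMulVec]
    have hcs := cs x v
    have hθ2 : (0:ℝ) < nrm x ^ 2 := by positivity
    rcases le_total α 1 with h1 | h1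
    · have : 0 ≤ ((1 - α) / nrm x ^ 2) * (x ⬝ᵥ v) ^ 2 := by
        apply mul_nonneg (div_nonneg (by linarith) hθ2.le) (sq_nonneg _)
      simp only [smul_eq_mul]
      nlinarith [sq_nonneg (nrm v), mul_le_mul_of_nonneg_right hmα (sq_nonneg (nrm v))]
    · simp only [smul_eq_mul]
      have key : (1 - α) / nrm x ^ 2 * (x ⬝ᵥ v) ^ 2 ≥ (1 - α) * nrm v ^ 2 := by
        rw [ge_iff_le, div_mul_eq_mul_div, le_div_iff₀ hθ2]
        nlinarith
      nlinarith [mul_le_mul_of_nonneg_right hm1 (sq_nonneg (nrm v))]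

/-- Two-agent finite-time synchronization estimate: along any solution of
`ẋ₁ = L_{x₁} (x₂-x₁)/‖x₂-x₁‖`, `ẋ₂ = L_{x₂} (x₁-x₂)/‖x₁-x₂‖` that remains in
`{‖xᵢ‖ ≤ C}` with `C < π`, the derivative of `‖x₂-x₁‖²` equals
`-2 (x₂-x₁)ᵀ(L_{x₁}+L_{x₂})(x₂-x₁)/‖x₂-x₁‖` and is at most `-2 c₁ ‖x₂-x₁‖` for
some constant `c₁ > 0` depending only on `C`. -/
theorem two_agent_disagreement_decay (C : ℝ) (hC : C < Real.pi)
    (x₁ x₂ : ℝ → Fin 3 → ℝ)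
    (hx₁ : ∀ t, x₁ t ≠ x₂ t →
      HasDerivAt x₁ (Lmat (x₁ t) *ᵥ ((nrm (x₂ t - x₁ t))⁻¹ • (x₂ t - x₁ t))) t)
    (hx₂ : ∀ t, x₁ t ≠ x₂ t →
      HasDerivAt x₂ (Lmat (x₂ t) *ᵥ ((nrm (x₁ t - x₂ t))⁻¹ • (x₁ t - x₂ t))) t)
    (hbound : ∀ t, nrm (x₁ t) ≤ C ∧ nrm (x₂ t) ≤ C) :
    ∃ c₁ > (0 : ℝ), ∀ t, x₁ t ≠ x₂ t →
      deriv (fun s => (nrm (x₂ s - x₁ s)) ^ 2) t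
          = -2 * ((x₂ t - x₁ t) ⬝ᵥ ((Lmat (x₁ t) + Lmat (x₂ t)) *ᵥ (x₂ t - x₁ t)))
              / nrm (x₂ t - x₁ t) ∧
        deriv (fun s => (nrm (x₂ s - x₁ s)) ^ 2) t ≤ -2 * c₁ * nrm (x₂ t - x₁ t) := by
  by_cases hCpos : 0 < C
  · refine ⟨min (Real.sin C / C) 1, lt_min (div_pos (Real.sin_pos_of_pos_of_lt_pi hCpos hC) hCpos) one_pos, fun t ht => ?_⟩
    set c := min (Real.sin C / C) 1 with hc
    set v := x₂ t - x₁ t with hv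
    have hvne : v ≠ 0 := sub_ne_zero.2 (Ne.symm ht)
    have hnv : 0 < nrm v := nrm_pos hvne
    -- rewrite the derivatives
    have hneg : x₁ t - x₂ t = -v := by rw [hv]; abel
    have hd₁ : HasDerivAt x₁ ((nrm v)⁻¹ • (Lmat (x₁ t) *ᵥ v)) t := by
      have := hx₁ t ht
      rwa [Matrix.mulVec_smul] at this
    have hd₂ : HasDerivAt x₂ (-((nrm v)⁻¹ • (Lmat (x₂ t) *ᵥ v))) t := by
      have := hx₂ t ht
      rw [hneg, nrm_neg, Matrix.mulVec_smul] at this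
      convert this using 1
      rw [Matrix.mulVec_neg]
      simp
    -- the squared-norm function
    have hfun : (fun s => (nrm (x₂ s - x₁ s)) ^ 2)
        = (fun s => ∑ i, ((x₂ s - x₁ s) i) ^ 2) := by
      funext s; exact sq_nrm _
    set w : Fin 3 → ℝ := -((nrm v)⁻¹ • (Lmat (x₂ t) *ᵥ v)) - (nrm v)⁻¹ • (Lmat (x₁ t) *ᵥ v)
      with hw
    have hD : HasDerivAt (fun s => ∑ i, ((x₂ s - x₁ s) i) ^ 2)
        (∑ i, 2 * v i * w i) t := by
      have : ∀ i : Fin 3, HasDerivAt (fun s => ((x₂ s - x₁ s) i) ^ 2)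
          (2 * v i * w i) t := by
        intro i
        have h2i := hasDerivAt_pi.1 hd₂ i
        have h1i := hasDerivAt_pi.1 hd₁ i
        have hsub : HasDerivAt (fun s => (x₂ s - x₁ s) i) (w i) t := by
          simpa [hw] using h2i.fun_sub h1i
        refine (hsub.fun_pow 2).congr_deriv ?_
        simp only [hv, Pi.sub_apply, Nat.cast_ofNat, pow_one]
        ring
      exact HasDerivAt.fun_sum (fun i _ => this i)
    have hderiv : deriv (fun s => (nrm (x₂ s - x₁ s)) ^ 2) t = ∑ i, 2 * v i * w i := by
      rw [hfun]; exact hD.deriv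
    -- identify the derivative with the dot-product expression
    have hsum : (∑ i, 2 * v i * w i)
        = -2 * (v ⬝ᵥ ((Lmat (x₁ t) + Lmat (x₂ t)) *ᵥ v)) / nrm v := by
      rw [Matrix.add_mulVec, dotProduct_add, dotProduct, dotProduct]
      rw [hw]
      simp only [Pi.sub_apply, Pi.neg_apply, Pi.smul_apply, smul_eq_mul,
        Fin.sum_univ_three]
      field_simp
      ring
    have heq : deriv (fun s => (nrm (x₂ s - x₁ s)) ^ 2) t
        = -2 * (v ⬝ᵥ ((Lmat (x₁ t) + Lmat (x₂ t)) *ᵥ v)) / nrm v := by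
      rw [hderiv, hsum]
    refine ⟨heq, ?_⟩
    rw [heq]
    have hq₁ := dot_Lmat_ge C hCpos hC (x₁ t) v (hbound t).1
    have hq₂ := dot_Lmat_ge C hCpos hC (x₂ t) v (hbound t).2
    have hqsum : 2 * c * nrm v ^ 2 ≤ v ⬝ᵥ ((Lmat (x₁ t) + Lmat (x₂ t)) *ᵥ v) := by
      rw [Matrix.add_mulVec, dotProduct_add]
      rw [hc] at *
      linarith
    rw [div_le_iff₀ hnv]
    have hcpos : 0 < c := lt_min (div_pos (Real.sin_pos_of_pos_of_lt_pi hCpos hC) hCpos) one_pos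
    nlinarith [sq_nonneg (nrm v)]
  · -- C ≤ 0 : the bounds force x₁ = x₂ everywhere, so the statement is vacuous
    refine ⟨1, one_pos, fun t ht => absurd ?_ ht⟩
    have h1 : x₁ t = 0 := by
      by_contra h
      exact absurd ((hbound t).1) (not_le.2 (lt_of_le_of_lt (not_lt.1 hCpos) (nrm_pos h)))
    have h2 : x₂ t = 0 := by
      by_contra h
      exact absurd ((hbound t).2) (not_le.2 (lt_of_le_of_lt (not_lt.1 hCpos) (nrm_pos h)))
    rw [h1, h2]
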